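/- Suppose η : [x*, 1] → ℝ is differentiable with η(1) = η₀ > 0, η(x) > 0 for all x, and satisfies the differential inequality dη/dx ≤ -(η/x)(1 - δ₀/(x(1+δ₀)-δ₀)) for x ∈ [x*,1], where x* = 3δ₀/(1+δ₀) and 0 < δ₀ < 1. Then for all x ∈ [x*,1], η₀ ≤ η(x)·x²/(x(1+δ₀)-δ₀). -/

import Mathlib

theorem gronwall_minkowskian (δ₀ η₀ : ℝ) (η η' : ℝ → ℝ)
    (hδ : 0 < δ₀) (hδ1 : δ₀ < 1) (hxstar : 3 * δ₀ / (1 + δ₀) ≤ 1)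
    (hdiff : ∀ x ∈ Set.Icc (3 * δ₀ / (1 + δ₀)) 1, HasDerivAt η (η' x) x)
    (hη1 : η 1 = η₀) (hη₀ : 0 < η₀)
    (hpos : ∀ x ∈ Set.Icc (3 * δ₀ / (1 + δ₀)) 1, 0 < η x)
    (hineq : ∀ x ∈ Set.Icc (3 * δ₀ / (1 + δ₀)) 1,
      η' x ≤ -(η x / x) * (1 - δ₀ / (x * (1 + δ₀) - δ₀))) :
    ∀ x ∈ Set.Icc (3 * δ₀ / (1 + δ₀)) 1,
      η₀ ≤ η x * x ^ 2 / (x * (1 + δ₀) - δ₀) := by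
  set a := 3 * δ₀ / (1 + δ₀) with ha
  have h1δ : (0:ℝ) < 1 + δ₀ := by linarith
  have hapos : 0 < a := by positivity
  have haval : a * (1 + δ₀) = 3 * δ₀ := by
    rw [ha, div_mul_cancel₀ _ h1δ.ne']
  have hden : ∀ y ∈ Set.Icc a 1, 0 < y * (1 + δ₀) - δ₀ := by
    intro y hy
    nlinarith [hy.1, mul_le_mul_of_nonneg_right hy.1 h1δ.le]
  set F : ℝ → ℝ := fun y => η y * y ^ 2 / (y * (1 + δ₀) - δ₀) with hF
  have hderivF : ∀ y ∈ Set.Icc a 1, HasDerivAt F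
      (((η' y * y ^ 2 + η y * (2 * y)) * (y * (1 + δ₀) - δ₀) -
        η y * y ^ 2 * (1 + δ₀)) / (y * (1 + δ₀) - δ₀) ^ 2) y := by
    intro y hy
    have hd := hden y hy
    have h1 : HasDerivAt (fun z : ℝ => η z * z ^ 2)
        (η' y * y ^ 2 + η y * (2 * y)) y := by
      have hp : HasDerivAt (fun z : ℝ => z ^ 2) (2 * y) y := by
        simpa using hasDerivAt_pow 2 y
      exact (hdiff y hy).mul hp
    have h2 : HasDerivAt (fun z : ℝ => z * (1 + δ₀) - δ₀) (1 + δ₀) y := by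
      simpa using ((hasDerivAt_id y).mul_const (1 + δ₀)).sub_const δ₀
    exact h1.div h2 (ne_of_gt hd)
  have hcont : ContinuousOn F (Set.Icc a 1) := fun y hy =>
    (hderivF y hy).continuousAt.continuousWithinAt
  have hant : AntitoneOn F (Set.Icc a 1) := by
    apply antitoneOn_of_deriv_nonpos (convex_Icc a 1) hcont
    · intro y hy
      rw [interior_Icc] at hy
      exact (hderivF y (Set.Ioo_subset_Icc_self hy)).differentiableAt.differentiableWithinAt
    · intro y hy
      rw [interior_Icc] at hy
      have hy' := Set.Ioo_subset_Icc_self hy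
      rw [(hderivF y hy').deriv]
      have hd := hden y hy'
      have hypos : 0 < y := lt_trans hapos hy.1
      have hη := hpos y hy'
      have key := hineq y hy'
      apply div_nonpos_of_nonpos_of_nonneg _ (sq_nonneg _)
      have h2 : η' y * (y ^ 2 * (y * (1 + δ₀) - δ₀)) ≤
          -(η y / y) * (1 - δ₀ / (y * (1 + δ₀) - δ₀)) *
            (y ^ 2 * (y * (1 + δ₀) - δ₀)) :=
        mul_le_mul_of_nonneg_right key (by positivity)
      have h3 : -(η y / y) * (1 - δ₀ / (y * (1 + δ₀) - δ₀)) *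
          (y ^ 2 * (y * (1 + δ₀) - δ₀)) =
          -(η y * y * ((y * (1 + δ₀) - δ₀) - δ₀)) := by
        field_simp
      rw [h3] at h2
      nlinarith [h2]
  intro x hx
  have h1mem : (1:ℝ) ∈ Set.Icc a 1 := ⟨hxstar, le_refl 1⟩
  have := hant hx h1mem hx.2
  have hF1 : F 1 = η₀ := by
    simp only [hF, hη1, one_pow, one_mul, mul_one]
    norm_num
  rw [hF1] at this
  exact this
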